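/- For even i ≥ 2 write Σ_i = d_2 + d_4 + ⋯ + d_i and D_i = (i+1)·Σ_i. Then for all sufficiently large even i, (exp((i/2)·Σ_i) + 1)·2^{−D_i} ≤ 2·exp(i·Σ_i·(1/2 − log 2)) < exp(−d_i). -/

import Mathlib

def evenSum (d : ℕ → ℤ) (n : ℕ) : ℤ := ∑ j ∈ Finset.Icc 1 n, if Even j then d j else 0

def oddSum (d : ℕ → ℤ) (n : ℕ) : ℤ := ∑ j ∈ Finset.Icc 1 n, if Odd j then d j else 0

/-- The pair of sequences `(o, d)` (indexed from 1) satisfies the recursive definition: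
`o 1 = -1`, `o 2 = 2`, `d 1 = 1`, and for `i ≥ 2`:
`o (i+1) = o (i-1) + i·(d 2 + d 4 + ⋯ + d (i-1))` if `i` is odd,
`o (i+1) = o (i-1) - i·(d 1 + d 3 + ⋯ + d (i-1))` if `i` is even,
and `d i = i·|o i − o (i+1)|`. -/
def IsOD (o d : ℕ → ℤ) : Prop :=
  o 1 = -1 ∧ o 2 = 2 ∧ d 1 = 1 ∧
  (∀ i : ℕ, 2 ≤ i → Odd i → o (i + 1) = o (i - 1) + (i : ℤ) * evenSum d (i - 1)) ∧
  (∀ i : ℕ, 2 ≤ i → Even i → o (i + 1) = o (i - 1) - (i : ℤ) * oddSum d (i - 1)) ∧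
  (∀ i : ℕ, 2 ≤ i → d i = (i : ℤ) * |o i - o (i + 1)|)

/-- With `Σ_i = d 2 + d 4 + ⋯ + d i` and `D_i = (i+1)·Σ_i`, for all sufficiently large even
`i`: `(exp((i/2)·Σ_i) + 1) · 2^{-D_i} ≤ 2·exp(i·Σ_i·(1/2 − log 2)) < exp(−d_i)`. -/
theorem stmt_10 (o d : ℕ → ℤ) (h : IsOD o d) :
    ∃ N : ℕ, ∀ i : ℕ, N ≤ i → Even i →
      (Real.exp ((i : ℝ) / 2 * (evenSum d i : ℝ)) + 1) *
          (2 : ℝ) ^ (-(((i : ℤ) + 1) * evenSum d i)) ≤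
        2 * Real.exp ((i : ℝ) * (evenSum d i : ℝ) * (1 / 2 - Real.log 2)) ∧
      2 * Real.exp ((i : ℝ) * (evenSum d i : ℝ) * (1 / 2 - Real.log 2)) <
        Real.exp (-(d i : ℝ)) := by
  obtain ⟨h1, h2, h3, hodd, heven, hd⟩ := h
  have dnn : ∀ j : ℕ, 1 ≤ j → 0 ≤ d j := by
    intro j hj
    rcases eq_or_lt_of_le hj with hj'|hj'
    · rw [← hj', h3]; norm_num
    · rw [hd j hj']; positivity
  have osnn : ∀ n, 0 ≤ oddSum d n := by
    intro n
    apply Finset.sum_nonneg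
    intro j hj
    split
    · exact dnn j (Finset.mem_Icc.mp hj).1
    · exact le_refl _
  have esnn : ∀ n, 0 ≤ evenSum d n := by
    intro n
    apply Finset.sum_nonneg
    intro j hj
    split
    · exact dnn j (Finset.mem_Icc.mp hj).1
    · exact le_refl _
  -- sign pattern of o
  have osign : ∀ i : ℕ, 1 ≤ i → (Odd i → o i ≤ -1) ∧ (Even i → 2 ≤ o i) := by
    intro i
    induction i using Nat.strong_induction_on with
    | _ i ih =>
      intro hi
      match i, hi with
      | 1, _ => exact ⟨fun _ => by rw [h1], fun he => absurd he (by decide)⟩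
      | 2, _ => exact ⟨fun ho => absurd ho (by decide), fun _ => by rw [h2]⟩
      | (k+3), _ =>
        have hk2 : 2 ≤ k + 2 := by omega
        have hsub : k + 2 - 1 = k + 1 := by omega
        have ihk : (Odd (k+1) → o (k+1) ≤ -1) ∧ (Even (k+1) → 2 ≤ o (k+1)) :=
          ih (k+1) (by omega) (by omega)
        constructor
        · intro ho
          have he : Even (k+2) := by
            obtain ⟨m, hm⟩ := ho; exact ⟨m, by omega⟩
          have := heven (k+2) hk2 he
          rw [hsub] at this
          have hodd' : Odd (k+1) := by
            obtain ⟨r, hr⟩ := he; exact ⟨r - 1, by omega⟩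
          have h5 : o (k+1) ≤ -1 := ihk.1 hodd'
          have h6 : (0:ℤ) ≤ (k+2 : ℕ) * oddSum d (k+1) :=
            mul_nonneg (by positivity) (osnn _)
          have : o (k+3) = o (k+1) - (k+2 : ℕ) * oddSum d (k+1) := this
          omega
        · intro he
          have ho' : Odd (k+2) := by
            obtain ⟨r, hr⟩ := he; exact ⟨r - 1, by omega⟩
          have := hodd (k+2) hk2 ho'
          rw [hsub] at this
          have heven' : Even (k+1) := by
            obtain ⟨m, hm⟩ := ho'; exact ⟨m, by omega⟩
          have h5 : 2 ≤ o (k+1) := ihk.2 heven'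
          have h6 : (0:ℤ) ≤ (k+2 : ℕ) * evenSum d (k+1) :=
            mul_nonneg (by positivity) (esnn _)
          have : o (k+3) = o (k+1) + (k+2 : ℕ) * evenSum d (k+1) := this
          omega
  -- d i ≥ i for even i ≥ 2
  have dge : ∀ i : ℕ, 2 ≤ i → Even i → (i : ℤ) ≤ d i := by
    intro i hi he
    have h5 : 2 ≤ o i := (osign i (by omega)).2 he
    have h6 : o (i+1) ≤ -1 := (osign (i+1) (by omega)).1 (he.add_one)
    have habs : (1:ℤ) ≤ |o i - o (i+1)| := by
      have : (1:ℤ) ≤ o i - o (i+1) := by omega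
      calc (1:ℤ) ≤ o i - o (i+1) := this
        _ ≤ |o i - o (i+1)| := le_abs_self _
    rw [hd i hi]
    calc (i:ℤ) = (i:ℤ) * 1 := (mul_one _).symm
      _ ≤ (i:ℤ) * |o i - o (i+1)| := by
          apply mul_le_mul_of_nonneg_left habs (by positivity)
  -- evenSum d i ≥ d i for even i
  have Sge : ∀ i : ℕ, 2 ≤ i → Even i → d i ≤ evenSum d i := by
    intro i hi he
    have hmem : i ∈ Finset.Icc 1 i := Finset.mem_Icc.mpr ⟨by omega, le_refl _⟩
    have := Finset.single_le_sum (f := fun j => if Even j then d j else 0)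
      (fun j hj => by
        show (0:ℤ) ≤ if Even j then d j else 0
        split
        · exact dnn j (Finset.mem_Icc.mp hj).1
        · exact le_refl _) hmem
    simpa [he, evenSum] using this
  refine ⟨10, fun i hi he => ?_⟩
  have hi2 : 2 ≤ i := by omega
  set S : ℝ := (evenSum d i : ℝ) with hS
  set D : ℝ := (d i : ℝ) with hD
  have hDi : (i : ℝ) ≤ D := by rw [hD]; exact_mod_cast dge i hi2 he
  have hSD : D ≤ S := by rw [hD, hS]; exact_mod_cast Sge i hi2 he
  have hi10 : (10 : ℝ) ≤ (i : ℝ) := by exact_mod_cast hi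
  have hD10 : (10 : ℝ) ≤ D := le_trans hi10 hDi
  have hS0 : (0 : ℝ) ≤ S := by linarith
  have hL1 : (0.6931471803 : ℝ) < Real.log 2 := Real.log_two_gt_d9
  have hL2 : Real.log 2 < 0.6931471808 := Real.log_two_lt_d9
  have hzpow : ∀ m : ℤ, (2 : ℝ) ^ m = Real.exp ((m : ℝ) * Real.log 2) := by
    intro m
    rw [← Real.rpow_intCast, Real.rpow_def_of_pos (by norm_num : (0:ℝ) < 2)]
    ring_nf
  constructor
  · rw [hzpow]
    push_cast
    have ha : (0:ℝ) ≤ (i : ℝ) / 2 * S := by positivity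
    have h1' : Real.exp ((i : ℝ) / 2 * S) + 1 ≤ 2 * Real.exp ((i : ℝ) / 2 * S) := by
      have := Real.one_le_exp ha
      linarith
    calc (Real.exp ((i : ℝ) / 2 * S) + 1) * Real.exp (-(((i:ℝ) + 1) * S) * Real.log 2)
        ≤ 2 * Real.exp ((i : ℝ) / 2 * S) * Real.exp (-(((i:ℝ) + 1) * S) * Real.log 2) := by
          apply mul_le_mul_of_nonneg_right h1' (Real.exp_pos _).le
      _ = 2 * Real.exp ((i : ℝ) / 2 * S + -(((i:ℝ) + 1) * S) * Real.log 2) := by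
          rw [Real.exp_add]; ring
      _ ≤ 2 * Real.exp ((i : ℝ) * S * (1 / 2 - Real.log 2)) := by
          have hSL : (0:ℝ) ≤ S * Real.log 2 := mul_nonneg hS0 (by linarith)
          have : (i : ℝ) / 2 * S + -(((i:ℝ) + 1) * S) * Real.log 2
              ≤ (i : ℝ) * S * (1 / 2 - Real.log 2) := by nlinarith
          have := Real.exp_le_exp.mpr this
          linarith
  · rw [show (2:ℝ) * Real.exp ((i : ℝ) * S * (1 / 2 - Real.log 2))
        = Real.exp (Real.log 2 + (i : ℝ) * S * (1 / 2 - Real.log 2)) by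
      rw [Real.exp_add, Real.exp_log (by norm_num)]]
    rw [Real.exp_lt_exp]
    nlinarith [mul_nonneg (mul_nonneg (by linarith : (0:ℝ) ≤ (i:ℝ) - 10) hS0)
        (by linarith : (0:ℝ) ≤ Real.log 2 - 1/2),
      mul_le_mul_of_nonneg_left (by linarith : (0.1931:ℝ) ≤ Real.log 2 - 1/2)
        (by linarith : (0:ℝ) ≤ 10 * S)]
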